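/- Let u₁, u₂, … be i.i.d. standard normal random variables, and let c_i^{(n)}, 1 ≤ i ≤ n, be nonnegative constants with sup_{n,i} c_i^{(n)} < ∞ and (1/n) Σ_{i=1}^n c_i^{(n)} → c. Then (1/n) Σ_{i=1}^n c_i^{(n)} u_i² → c almost surely as n → ∞. -/

import Mathlib

open scoped ENNReal NNReal
open MeasureTheory ProbabilityTheory Filter Real Set


lemma aux_pow_le_exp (k : ℕ) {y : ℝ} (hy : 0 ≤ y) : y ^ k / k.factorial ≤ Real.exp y := by
  calc y ^ k / k.factorial ≤ ∑ i ∈ Finset.range (k+1), y ^ i / i.factorial := by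
        refine Finset.single_le_sum (f := fun i => y ^ i / (i.factorial : ℝ)) ?_ ?_
        · intro i _; positivity
        · simp
    _ ≤ Real.exp y := Real.sum_le_exp_of_nonneg hy _

lemma aux_int_pow_exp (k : ℕ) {b : ℝ} (hb : 0 < b) :
    Integrable (fun x : ℝ => x ^ k * Real.exp (-b * x ^ 2)) := by
  have hcont : Continuous (fun x : ℝ => x ^ k * Real.exp (-b * x ^ 2)) := by
    continuity
  set C : ℝ := k.factorial * (2 / b) ^ k with hC
  have hC0 : 0 ≤ C := by positivity
  have hg : Integrable (fun x : ℝ => Real.exp (-b * x ^ 2) + C * Real.exp (-(b/2) * x ^ 2)) :=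
    (integrable_exp_neg_mul_sq hb).add ((integrable_exp_neg_mul_sq (by linarith)).const_mul C)
  refine hg.mono' hcont.aestronglyMeasurable (Filter.Eventually.of_forall fun x => ?_)
  have h1 : |x| ^ k ≤ 1 + (x ^ 2) ^ k := by
    rcases le_total (|x|) 1 with h | h
    · have : |x| ^ k ≤ 1 := pow_le_one₀ (abs_nonneg x) h
      nlinarith [pow_nonneg (sq_nonneg x) k]
    · have h2 : |x| ^ k ≤ (x^2) ^ k := by
        apply pow_le_pow_left₀ (abs_nonneg x)
        nlinarith [abs_nonneg x, sq_abs x]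
      linarith
  have h3 : (x ^ 2) ^ k ≤ C * Real.exp (b/2 * x ^ 2) := by
    have := aux_pow_le_exp k (y := b/2 * x^2) (by positivity)
    have hbk : (0:ℝ) < (b/2) ^ k := by positivity
    rw [div_le_iff₀ (by positivity : (0:ℝ) < (k.factorial : ℝ))] at this
    have : (b/2 * x^2) ^ k ≤ Real.exp (b/2 * x^2) * k.factorial := this
    rw [mul_pow] at this
    have h4 : (x ^ 2) ^ k = ((b/2)^k * (x^2)^k) / (b/2)^k := by field_simp
    rw [h4, div_le_iff₀ hbk, hC]
    calc (b/2)^k * (x^2)^k ≤ Real.exp (b/2 * x^2) * k.factorial := this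
      _ = k.factorial * (2/b)^k * Real.exp (b/2 * x^2) * (b/2)^k := by
          rw [div_pow, div_pow]
          field_simp
  have hexp : 0 < Real.exp (-b * x ^ 2) := Real.exp_pos _
  have key : ‖x ^ k * Real.exp (-b * x ^ 2)‖ = |x| ^ k * Real.exp (-b * x ^ 2) := by
    rw [norm_mul, Real.norm_eq_abs, Real.norm_eq_abs, abs_pow, abs_of_pos hexp]
  rw [key]
  have : |x| ^ k * Real.exp (-b * x^2) ≤ (1 + C * Real.exp (b/2 * x^2)) * Real.exp (-b*x^2) := by
    apply mul_le_mul_of_nonneg_right _ hexp.le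
    calc |x| ^ k ≤ 1 + (x^2)^k := h1
      _ ≤ 1 + C * Real.exp (b/2 * x^2) := by linarith
  refine this.trans (le_of_eq ?_)
  rw [add_mul, one_mul, mul_assoc, ← Real.exp_add]
  ring_nf

lemma aux_tendsto_atTop {b : ℝ} (hb : 0 < b) :
    Tendsto (fun x : ℝ => x * Real.exp (-b * x ^ 2)) atTop (nhds 0) := by
  have h1 : Tendsto (fun t : ℝ => t ^ 1 * Real.exp (-t)) atTop (nhds 0) :=
    Real.tendsto_pow_mul_exp_neg_atTop_nhds_zero 1
  have h2 : Tendsto (fun x : ℝ => b * x ^ 2) atTop atTop :=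
    (tendsto_pow_atTop (two_ne_zero)).const_mul_atTop hb
  have h3 : Tendsto (fun x : ℝ => (b * x ^ 2) ^ 1 * Real.exp (-(b * x ^ 2))) atTop (nhds 0) :=
    h1.comp h2
  have h4 : Tendsto (fun x : ℝ => b⁻¹ * ((b * x ^ 2) ^ 1 * Real.exp (-(b * x ^ 2))))
      atTop (nhds (b⁻¹ * 0)) := h3.const_mul _
  rw [mul_zero] at h4
  refine tendsto_of_tendsto_of_tendsto_of_le_of_le' tendsto_const_nhds h4 ?_ ?_
  · filter_upwards [eventually_ge_atTop (0:ℝ)] with x hx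
    positivity
  · filter_upwards [eventually_ge_atTop (1:ℝ)] with x hx
    have : x ≤ x ^ 2 := by nlinarith
    have hexp : 0 < Real.exp (-b * x ^ 2) := Real.exp_pos _
    calc x * Real.exp (-b * x ^ 2) ≤ x ^ 2 * Real.exp (-b * x ^ 2) :=
          mul_le_mul_of_nonneg_right this hexp.le
      _ = b⁻¹ * ((b * x ^ 2) ^ 1 * Real.exp (-(b * x ^ 2))) := by
          rw [pow_one, neg_mul]
          field_simp

lemma aux_integral_sq {b : ℝ} (hb : 0 < b) :
    ∫ x : ℝ, x ^ 2 * Real.exp (-b * x ^ 2) = Real.sqrt (π / b) / (2 * b) := by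
  set F : ℝ → ℝ := fun x => -(2*b)⁻¹ * (x * Real.exp (-b * x ^ 2)) with hF
  set f : ℝ → ℝ := fun x => x ^ 2 * Real.exp (-b * x ^ 2) - (2*b)⁻¹ * Real.exp (-b * x ^ 2)
    with hf
  have hderiv : ∀ x : ℝ, HasDerivAt F (f x) x := by
    intro x
    have h1 : HasDerivAt (fun x : ℝ => -b * x ^ 2) (-b * (2 * x)) x := by
      simpa using ((hasDerivAt_pow 2 x).const_mul (-b))
    have h2 : HasDerivAt (fun x : ℝ => Real.exp (-b * x ^ 2))
        (Real.exp (-b * x ^ 2) * (-b * (2 * x))) x := h1.exp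
    have h3 : HasDerivAt (fun x : ℝ => x * Real.exp (-b * x ^ 2))
        (1 * Real.exp (-b * x ^ 2) + x * (Real.exp (-b * x ^ 2) * (-b * (2 * x)))) x :=
      (hasDerivAt_id x).mul h2
    have h4 := h3.const_mul (-(2*b)⁻¹)
    refine h4.congr_deriv ?_
    simp only [hf]
    field_simp
    ring
  have hint : Integrable f := by
    exact (aux_int_pow_exp 2 hb).sub ((integrable_exp_neg_mul_sq hb).const_mul _)
  have hlimTop : Tendsto F atTop (nhds 0) := by
    have h := (aux_tendsto_atTop hb).const_mul (-(2*b)⁻¹)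
    rw [mul_zero] at h
    exact h
  have hlimBot : Tendsto F atBot (nhds 0) := by
    have h0 := (aux_tendsto_atTop hb).const_mul ((2*b)⁻¹)
    rw [mul_zero] at h0
    have h := h0.comp (tendsto_neg_atBot_atTop)
    have heq : ((fun x : ℝ => (2*b)⁻¹ * (x * Real.exp (-b * x ^ 2))) ∘ fun x : ℝ => -x) = F := by
      funext x
      simp only [Function.comp_apply, hF]
      ring_nf
    rwa [heq] at h
  have hIoi : ∫ x in Ioi (0:ℝ), f x = 0 - F 0 :=
    integral_Ioi_of_hasDerivAt_of_tendsto' (fun x _ => hderiv x) hint.integrableOn hlimTop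
  have hIic : ∫ x in Iic (0:ℝ), f x = F 0 - 0 :=
    integral_Iic_of_hasDerivAt_of_tendsto' (fun x _ => hderiv x) hint.integrableOn hlimBot
  have htot : ∫ x : ℝ, f x = 0 := by
    rw [← intervalIntegral.integral_Iic_add_Ioi (b := (0:ℝ)) hint.integrableOn hint.integrableOn,
      hIoi, hIic]
    ring
  have hsub : ∫ x : ℝ, f x
      = (∫ x : ℝ, x ^ 2 * Real.exp (-b * x ^ 2)) - (2*b)⁻¹ * ∫ x : ℝ, Real.exp (-b * x ^ 2) := by
    rw [hf]
    rw [integral_sub (aux_int_pow_exp 2 hb) ((integrable_exp_neg_mul_sq hb).const_mul _),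
      MeasureTheory.integral_const_mul]
  rw [htot, integral_gaussian] at hsub
  have h5 := sub_eq_zero.mp hsub.symm
  rw [h5]
  exact (div_eq_inv_mul _ _).symm

lemma gauss_pdf_eq (x : ℝ) :
    gaussianPDFReal 0 1 x = (Real.sqrt (2*π))⁻¹ * Real.exp (-(2⁻¹:ℝ) * x^2) := by
  rw [gaussianPDFReal]
  simp only [NNReal.coe_one, mul_one, sub_zero]
  rw [show -x^2/(2:ℝ) = -(2⁻¹:ℝ)*x^2 by ring]

lemma gauss_int_pow (k : ℕ) : Integrable (fun x : ℝ => x ^ k) (gaussianReal 0 1) := by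
  rw [gaussianReal_of_var_ne_zero 0 one_ne_zero,
    integrable_withDensity_iff (measurable_gaussianPDF 0 1)
      (Filter.Eventually.of_forall fun x => ENNReal.ofReal_lt_top)]
  have : (fun x : ℝ => x ^ k * (gaussianPDF 0 1 x).toReal)
      = fun x : ℝ => (Real.sqrt (2*π))⁻¹ * (x ^ k * Real.exp (-(2⁻¹:ℝ) * x^2)) := by
    funext x
    rw [gaussianPDF, ENNReal.toReal_ofReal (gaussianPDFReal_nonneg 0 1 x), gauss_pdf_eq]
    ring
  rw [this]
  exact (aux_int_pow_exp k (by norm_num)).const_mul _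

lemma gauss_sq : ∫ x, x ^ 2 ∂(gaussianReal 0 1) = 1 := by
  rw [gaussianReal_of_var_ne_zero 0 one_ne_zero]
  have hrepr : gaussianPDF 0 1 = fun x => ((gaussianPDFReal 0 1 x).toNNReal : ℝ≥0∞) := rfl
  rw [hrepr, integral_withDensity_eq_integral_smul (measurable_gaussianPDFReal 0 1).real_toNNReal]
  have : (fun x : ℝ => (gaussianPDFReal 0 1 x).toNNReal • x ^ 2)
      = fun x : ℝ => (Real.sqrt (2*π))⁻¹ * (x ^ 2 * Real.exp (-(2⁻¹:ℝ) * x^2)) := by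
    funext x
    rw [NNReal.smul_def, Real.coe_toNNReal _ (gaussianPDFReal_nonneg 0 1 x), gauss_pdf_eq,
      smul_eq_mul]
    ring
  rw [this, MeasureTheory.integral_const_mul, aux_integral_sq (by norm_num : (0:ℝ) < 2⁻¹)]
  have h1 : π / (2⁻¹:ℝ) = 2 * π := by ring
  rw [h1]
  have h2 : Real.sqrt (2*π) ≠ 0 := by
    positivity
  field_simp

lemma moment4_sum {Ω : Type*} [MeasurableSpace Ω] (μ : Measure Ω) [IsProbabilityMeasure μ]
    (Z : ℕ → Ω → ℝ) (hZm : ∀ i, Measurable (Z i))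
    (hind : iIndepFun Z μ)
    (hint : ∀ i, ∀ j, j ≤ 4 → Integrable (fun ω => (Z i ω)^j) μ)
    (hmean : ∀ i, ∫ ω, Z i ω ∂μ = 0)
    (A B : ℝ) (hA : 0 ≤ A) (hB : 0 ≤ B)
    (h2 : ∀ i, ∫ ω, (Z i ω)^2 ∂μ ≤ A) (h4 : ∀ i, ∫ ω, (Z i ω)^4 ∂μ ≤ B)
    (s : Finset ℕ) :
    (∀ j, j ≤ 4 → Integrable (fun ω => (∑ i ∈ s, Z i ω)^j) μ) ∧
      ∫ ω, (∑ i ∈ s, Z i ω) ∂μ = 0 ∧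
      ∫ ω, (∑ i ∈ s, Z i ω)^2 ∂μ ≤ A * s.card ∧
      ∫ ω, (∑ i ∈ s, Z i ω)^4 ∂μ ≤ B * s.card + 6 * A^2 * (s.card:ℝ)^2 := by
  classical
  induction s using Finset.induction_on with
  | empty =>
    refine ⟨fun j hj => ?_, ?_, ?_, ?_⟩ <;> simp
  | @insert k s hk ih =>
    obtain ⟨ihInt, ihMean, ih2, ih4⟩ := ih
    have hTm : Measurable (fun ω => ∑ i ∈ s, Z i ω) :=
      Finset.measurable_sum s (fun i _ => hZm i)
    have hTY : IndepFun (fun ω => ∑ i ∈ s, Z i ω) (Z k) μ := by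
      have h := hind.indepFun_finsetSum_of_notMem hZm hk
      rwa [show (∑ j ∈ s, Z j) = (fun ω => ∑ i ∈ s, Z i ω) from funext fun ω => by
        simp] at h
    have hpow : ∀ p q : ℕ, IndepFun (fun ω => (∑ i ∈ s, Z i ω)^p) (fun ω => (Z k ω)^q) μ :=
      fun p q => hTY.comp (measurable_id.pow_const p) (measurable_id.pow_const q)
    have hprod : ∀ p q : ℕ, p ≤ 4 → q ≤ 4 →
        Integrable (fun ω => (∑ i ∈ s, Z i ω)^p * (Z k ω)^q) μ := by
      intro p q hp hq
      exact (hpow p q).integrable_mul (ihInt p hp) (hint k q hq)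
    have hEprod : ∀ p q : ℕ,
        ∫ ω, (∑ i ∈ s, Z i ω)^p * (Z k ω)^q ∂μ
          = (∫ ω, (∑ i ∈ s, Z i ω)^p ∂μ) * (∫ ω, (Z k ω)^q ∂μ) := by
      intro p q
      exact (hpow p q).integral_mul_eq_mul_integral (hTm.pow_const p).aestronglyMeasurable
        ((hZm k).pow_const q).aestronglyMeasurable
    have hsum : ∀ ω, ∑ i ∈ insert k s, Z i ω = Z k ω + ∑ i ∈ s, Z i ω := by
      intro ω; rw [Finset.sum_insert hk]
    have hcard : ((insert k s).card : ℝ) = (s.card : ℝ) + 1 := by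
      rw [Finset.card_insert_of_notMem hk]; push_cast; ring
    have hZk1 : Integrable (Z k) μ := by simpa using hint k 1 (by norm_num)
    have hS1 : Integrable (fun ω => ∑ i ∈ s, Z i ω) μ := by
      simpa using ihInt 1 (by norm_num)
    -- integrability of all powers
    have hIntAll : ∀ j, j ≤ 4 → Integrable (fun ω => (∑ i ∈ insert k s, Z i ω)^j) μ := by
      intro j hj
      interval_cases j
      · simpa using integrable_const (1:ℝ)
      · refine ((hint k 1 (by norm_num)).add (ihInt 1 (by norm_num))).congr
          (Filter.Eventually.of_forall fun ω => ?_)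
        simp only [Pi.add_apply]; rw [hsum ω]; ring
      · refine ((hint k 2 (by norm_num)).add
          (((hprod 1 1 (by norm_num) (by norm_num)).const_mul 2).add
            (ihInt 2 (by norm_num)))).congr (Filter.Eventually.of_forall fun ω => ?_)
        simp only [Pi.add_apply]; rw [hsum ω]; ring
      · have i1 := hint k 3 (by norm_num)
        have i2 := (hprod 1 2 (by norm_num) (by norm_num)).const_mul 3
        have i3 := (hprod 2 1 (by norm_num) (by norm_num)).const_mul 3
        have i4 := ihInt 3 (by norm_num)
        refine (i1.add (i2.add (i3.add i4))).congr (Filter.Eventually.of_forall fun ω => ?_)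
        simp only [Pi.add_apply]; rw [hsum ω]; ring
      · have i1 := hint k 4 (by norm_num)
        have i2 := (hprod 1 3 (by norm_num) (by norm_num)).const_mul 4
        have i3 := (hprod 2 2 (by norm_num) (by norm_num)).const_mul 6
        have i4 := (hprod 3 1 (by norm_num) (by norm_num)).const_mul 4
        have i5 := ihInt 4 (by norm_num)
        refine (i1.add (i2.add (i3.add (i4.add i5)))).congr
          (Filter.Eventually.of_forall fun ω => ?_)
        simp only [Pi.add_apply]; rw [hsum ω]; ring
    have hMean : ∫ ω, (∑ i ∈ insert k s, Z i ω) ∂μ = 0 := by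
      have e1 : (fun ω => ∑ i ∈ insert k s, Z i ω)
          = fun ω => Z k ω + ∑ i ∈ s, Z i ω := funext fun ω => hsum ω
      rw [e1, integral_add hZk1 hS1, hmean k, ihMean, add_zero]
    have hS2nn : 0 ≤ ∫ ω, (∑ i ∈ s, Z i ω)^2 ∂μ :=
      integral_nonneg fun ω => by positivity
    have hZk2nn : 0 ≤ ∫ ω, (Z k ω)^2 ∂μ := integral_nonneg fun ω => by positivity
    have key2 : ∫ ω, (∑ i ∈ insert k s, Z i ω)^2 ∂μ
        = ∫ ω, (Z k ω)^2 ∂μ + ∫ ω, (∑ i ∈ s, Z i ω)^2 ∂μ := by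
      have e2 : (fun ω => (∑ i ∈ insert k s, Z i ω)^2)
          = fun ω => (Z k ω)^2 + (2*((∑ i ∈ s, Z i ω)^1 * (Z k ω)^1)
              + (∑ i ∈ s, Z i ω)^2) := by
        funext ω; rw [hsum ω]; ring
      have j1 : Integrable (fun ω => 2 * ((∑ i ∈ s, Z i ω)^1 * (Z k ω)^1)) μ :=
        (hprod 1 1 (by norm_num) (by norm_num)).const_mul 2
      have j2 := ihInt 2 (by norm_num)
      have j12 : Integrable (fun ω => 2 * ((∑ i ∈ s, Z i ω)^1 * (Z k ω)^1)
          + (∑ i ∈ s, Z i ω)^2) μ := j1.add j2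
      rw [e2, integral_add (hint k 2 (by norm_num)) j12, integral_add j1 j2,
        MeasureTheory.integral_const_mul, hEprod 1 1]
      simp only [pow_one]
      rw [ihMean, hmean k]
      ring
    have key4 : ∫ ω, (∑ i ∈ insert k s, Z i ω)^4 ∂μ
        = ∫ ω, (Z k ω)^4 ∂μ
          + 6 * ((∫ ω, (∑ i ∈ s, Z i ω)^2 ∂μ) * (∫ ω, (Z k ω)^2 ∂μ))
          + ∫ ω, (∑ i ∈ s, Z i ω)^4 ∂μ := by
      have e4 : (fun ω => (∑ i ∈ insert k s, Z i ω)^4)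
          = fun ω => (Z k ω)^4 + (4*((∑ i ∈ s, Z i ω)^1 * (Z k ω)^3)
              + (6*((∑ i ∈ s, Z i ω)^2 * (Z k ω)^2)
              + (4*((∑ i ∈ s, Z i ω)^3 * (Z k ω)^1) + (∑ i ∈ s, Z i ω)^4))) := by
        funext ω; rw [hsum ω]; ring
      have i2 : Integrable (fun ω => 4*((∑ i ∈ s, Z i ω)^1 * (Z k ω)^3)) μ :=
        (hprod 1 3 (by norm_num) (by norm_num)).const_mul 4
      have i3 : Integrable (fun ω => 6*((∑ i ∈ s, Z i ω)^2 * (Z k ω)^2)) μ :=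
        (hprod 2 2 (by norm_num) (by norm_num)).const_mul 6
      have i4 : Integrable (fun ω => 4*((∑ i ∈ s, Z i ω)^3 * (Z k ω)^1)) μ :=
        (hprod 3 1 (by norm_num) (by norm_num)).const_mul 4
      have i5 := ihInt 4 (by norm_num)
      have i45 : Integrable (fun ω => 4*((∑ i ∈ s, Z i ω)^3 * (Z k ω)^1)
          + (∑ i ∈ s, Z i ω)^4) μ := i4.add i5
      have i345 : Integrable (fun ω => 6*((∑ i ∈ s, Z i ω)^2 * (Z k ω)^2)
          + (4*((∑ i ∈ s, Z i ω)^3 * (Z k ω)^1) + (∑ i ∈ s, Z i ω)^4)) μ := i3.add i45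
      have i2345 : Integrable (fun ω => 4*((∑ i ∈ s, Z i ω)^1 * (Z k ω)^3)
          + (6*((∑ i ∈ s, Z i ω)^2 * (Z k ω)^2)
          + (4*((∑ i ∈ s, Z i ω)^3 * (Z k ω)^1) + (∑ i ∈ s, Z i ω)^4))) μ := i2.add i345
      rw [e4, integral_add (hint k 4 (by norm_num)) i2345,
        integral_add i2 i345, integral_add i3 i45, integral_add i4 i5,
        MeasureTheory.integral_const_mul, MeasureTheory.integral_const_mul,
        MeasureTheory.integral_const_mul, hEprod 1 3, hEprod 2 2, hEprod 3 1]
      simp only [pow_one]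
      rw [ihMean, hmean k]
      ring
    refine ⟨hIntAll, hMean, ?_, ?_⟩
    · rw [key2, hcard]
      have := h2 k
      nlinarith [Nat.cast_nonneg (α := ℝ) s.card]
    · rw [key4, hcard]
      have hb4 := h4 k
      have hmul : (∫ ω, (∑ i ∈ s, Z i ω)^2 ∂μ) * (∫ ω, (Z k ω)^2 ∂μ)
          ≤ (A * s.card) * A :=
        mul_le_mul ih2 (h2 k) hZk2nn (by positivity)
      nlinarith [Nat.cast_nonneg (α := ℝ) s.card]

/-- Weighted SLLN for chi-squared variables: if `u_i` are i.i.d. standard normal and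
`c_i^{(n)} ≥ 0` are uniformly bounded with `(1/n) Σ_{i=1}^n c_i^{(n)} → c`, then
`(1/n) Σ_{i=1}^n c_i^{(n)} u_i² → c` almost surely. -/
theorem stmt8 {Ω : Type*} [MeasurableSpace Ω] (μ : Measure Ω) [IsProbabilityMeasure μ]
    (u : ℕ → Ω → ℝ) (hmeas : ∀ i, Measurable (u i))
    (hindep : iIndepFun u μ)
    (hgauss : ∀ i, Measure.map (u i) μ = gaussianReal 0 1)
    (c : ℕ → ℕ → ℝ) (hc0 : ∀ n i, 0 ≤ c n i)
    (K : ℝ) (hK : ∀ n i, c n i ≤ K)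
    (cl : ℝ)
    (hcl : Tendsto (fun n : ℕ => (1 / (n : ℝ)) * ∑ i ∈ Finset.Icc 1 n, c n i)
      atTop (nhds cl)) :
    ∀ᵐ ω ∂μ, Tendsto (fun n : ℕ => (1 / (n : ℝ)) * ∑ i ∈ Finset.Icc 1 n, c n i * (u i ω)^2)
      atTop (nhds cl) := by
  classical
  -- facts about the standard gaussian
  have hγint : ∀ j, j ≤ 4 → Integrable (fun x : ℝ => (x^2-1)^j) (gaussianReal 0 1) := by
    intro j hj
    interval_cases j
    · simpa using integrable_const (1:ℝ)
    · exact ((gauss_int_pow 2).sub (integrable_const 1)).congr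
        (Filter.Eventually.of_forall fun x => by simp [Pi.sub_apply])
    · refine (((gauss_int_pow 4).sub ((gauss_int_pow 2).const_mul 2)).add
        (integrable_const 1)).congr (Filter.Eventually.of_forall fun x => ?_)
      simp only [Pi.add_apply, Pi.sub_apply]; ring
    · refine ((((gauss_int_pow 6).sub ((gauss_int_pow 4).const_mul 3)).add
        ((gauss_int_pow 2).const_mul 3)).sub (integrable_const 1)).congr
        (Filter.Eventually.of_forall fun x => ?_)
      simp only [Pi.add_apply, Pi.sub_apply]; ring
    · refine (((((gauss_int_pow 8).sub ((gauss_int_pow 6).const_mul 4)).add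
        ((gauss_int_pow 4).const_mul 6)).sub ((gauss_int_pow 2).const_mul 4)).add
        (integrable_const 1)).congr (Filter.Eventually.of_forall fun x => ?_)
      simp only [Pi.add_apply, Pi.sub_apply]; ring
  have hγmean : ∫ x, (x^2 - 1) ∂(gaussianReal 0 1) = 0 := by
    rw [integral_sub (gauss_int_pow 2) (integrable_const 1), gauss_sq]
    simp
  set M2 : ℝ := ∫ x, (x^2-1)^2 ∂(gaussianReal 0 1) with hM2
  set M4 : ℝ := ∫ x, (x^2-1)^4 ∂(gaussianReal 0 1) with hM4
  have hM2nn : 0 ≤ M2 := integral_nonneg fun x => by positivity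
  have hM4nn : 0 ≤ M4 := integral_nonneg fun x => by positivity
  have hK0 : 0 ≤ K := le_trans (hc0 0 0) (hK 0 0)
  -- transfer lemmas
  have htrans_int : ∀ (i : ℕ) (g : ℝ → ℝ), Measurable g →
      Integrable g (gaussianReal 0 1) → Integrable (fun ω => g (u i ω)) μ := by
    intro i g hg hgi
    rw [← hgauss i] at hgi
    exact (integrable_map_measure hg.aestronglyMeasurable (hmeas i).aemeasurable).mp hgi
  have htrans_eq : ∀ (i : ℕ) (g : ℝ → ℝ), Measurable g →
      ∫ ω, g (u i ω) ∂μ = ∫ x, g x ∂(gaussianReal 0 1) := by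
    intro i g hg
    rw [← hgauss i, integral_map (hmeas i).aemeasurable hg.aestronglyMeasurable]
  have hgm : ∀ j : ℕ, Measurable (fun x : ℝ => (x^2-1)^j) :=
    fun j => ((measurable_id.pow_const 2).sub measurable_const).pow_const j
  -- the centered weighted sums
  set A : ℝ := K^2 * M2 with hA
  set B : ℝ := K^4 * M4 with hB
  set C : ℝ := B + 6 * A^2 with hCdef
  have hAnn : 0 ≤ A := by positivity
  have hBnn : 0 ≤ B := by positivity
  have hCnn : 0 ≤ C := by positivity
  set W : ℕ → Ω → ℝ := fun n ω => ∑ i ∈ Finset.Icc 1 n, c n i * ((u i ω)^2 - 1) with hW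
  have hyp : ∀ n : ℕ, Integrable (fun ω => (W n ω)^4) μ ∧
      ∫ ω, (W n ω)^4 ∂μ ≤ C * (n:ℝ)^2 := by
    intro n
    have h := moment4_sum μ (fun i ω => c n i * ((u i ω)^2 - 1))
      (fun i => (((hmeas i).pow_const 2).sub measurable_const).const_mul (c n i))
      (hindep.comp (fun i x => c n i * (x^2 - 1))
        (fun i => ((measurable_id.pow_const 2).sub measurable_const).const_mul (c n i)))
      (fun i j hj => by
        refine ((htrans_int i (fun x => (x^2-1)^j) (hgm j) (hγint j hj)).const_mul
          ((c n i)^j)).congr (Filter.Eventually.of_forall fun ω => ?_)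
        exact (mul_pow (c n i) ((u i ω)^2 - 1) j).symm)
      (fun i => by
        rw [MeasureTheory.integral_const_mul,
          htrans_eq i (fun x => x^2 - 1) ((measurable_id.pow_const 2).sub measurable_const),
          hγmean, mul_zero])
      A B hAnn hBnn
      (fun i => by
        have e : (fun ω => (c n i * ((u i ω)^2 - 1))^2)
            = fun ω => (c n i)^2 * ((u i ω)^2-1)^2 := funext fun ω => by ring
        rw [e, MeasureTheory.integral_const_mul,
          htrans_eq i (fun x => (x^2-1)^2) (hgm 2), ← hM2, hA]
        exact mul_le_mul_of_nonneg_right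
          (pow_le_pow_left₀ (hc0 n i) (hK n i) 2) hM2nn)
      (fun i => by
        have e : (fun ω => (c n i * ((u i ω)^2 - 1))^4)
            = fun ω => (c n i)^4 * ((u i ω)^2-1)^4 := funext fun ω => by ring
        rw [e, MeasureTheory.integral_const_mul,
          htrans_eq i (fun x => (x^2-1)^4) (hgm 4), ← hM4, hB]
        exact mul_le_mul_of_nonneg_right
          (pow_le_pow_left₀ (hc0 n i) (hK n i) 4) hM4nn)
      (Finset.Icc 1 n)
    obtain ⟨hInt, -, -, h4⟩ := h
    have hcard : ((Finset.Icc 1 n).card : ℝ) = (n : ℝ) := by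
      rw [Nat.card_Icc]; push_cast [Nat.add_sub_cancel]; ring
    refine ⟨hInt 4 (by norm_num), ?_⟩
    rw [hcard] at h4
    have hn2 : (n:ℝ) ≤ (n:ℝ)^2 := by
      have : (n:ℝ) = 0 ∨ 1 ≤ (n:ℝ) := by
        rcases Nat.eq_zero_or_pos n with h | h
        · left; simp [h]
        · right; exact_mod_cast h
      rcases this with h | h
      · rw [h]; norm_num
      · nlinarith
    calc ∫ ω, (W n ω)^4 ∂μ ≤ B * (n:ℝ) + 6 * A^2 * (n:ℝ)^2 := h4
      _ ≤ B * (n:ℝ)^2 + 6 * A^2 * (n:ℝ)^2 := by nlinarith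
      _ = C * (n:ℝ)^2 := by rw [hCdef]; ring
  -- Borel--Cantelli for each ε = 1/(m+1)
  have hBC : ∀ m : ℕ, ∀ᵐ ω ∂μ, ∀ᶠ n : ℕ in atTop,
      |(n:ℝ)⁻¹ * W n ω| < 1/((m:ℝ)+1) := by
    intro m
    set ε : ℝ := 1/((m:ℝ)+1) with hε
    have hεpos : 0 < ε := by positivity
    set E : ℕ → Set Ω := fun n => {ω | ε ≤ |(n:ℝ)⁻¹ * W n ω|} with hE
    have hME : ∀ n : ℕ, μ (E n) ≤ ENNReal.ofReal (C/ε^4 * ((n:ℝ)^2)⁻¹) := by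
      intro n
      rcases Nat.eq_zero_or_pos n with h0 | hn
      · have : E n = ∅ := by
          ext ω
          simp only [hE, mem_setOf_eq, Set.mem_empty_iff_false, iff_false, not_le, h0]
          simp [hW, h0]
          exact hεpos
        rw [this]
        simp
      · have hnR : (0:ℝ) < (n:ℝ) := by exact_mod_cast hn
        have hfint : Integrable (fun ω => ((n:ℝ)⁻¹ * W n ω)^4) μ := by
          refine (((hyp n).1).const_mul (((n:ℝ)⁻¹)^4)).congr
            (Filter.Eventually.of_forall fun ω => ?_)
          ring
        have hmarkov := mul_meas_ge_le_integral_of_nonneg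
          (Filter.Eventually.of_forall (fun ω => by positivity :
            ∀ ω, 0 ≤ ((n:ℝ)⁻¹ * W n ω)^4)) hfint (ε^4)
        have hintval : ∫ ω, ((n:ℝ)⁻¹ * W n ω)^4 ∂μ ≤ C * ((n:ℝ)^2)⁻¹ := by
          have e : (fun ω => ((n:ℝ)⁻¹ * W n ω)^4)
              = fun ω => ((n:ℝ)⁻¹)^4 * (W n ω)^4 := funext fun ω => by ring
          rw [e, MeasureTheory.integral_const_mul]
          have h1 := (hyp n).2
          have h2 : ((n:ℝ)⁻¹)^4 * (C * (n:ℝ)^2) = C * ((n:ℝ)^2)⁻¹ := by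
            field_simp
          calc ((n:ℝ)⁻¹)^4 * ∫ ω, (W n ω)^4 ∂μ ≤ ((n:ℝ)⁻¹)^4 * (C * (n:ℝ)^2) :=
                mul_le_mul_of_nonneg_left h1 (by positivity)
            _ = C * ((n:ℝ)^2)⁻¹ := h2
        have hsub : E n ⊆ {ω | ε^4 ≤ ((n:ℝ)⁻¹ * W n ω)^4} := by
          intro ω hω
          simp only [hE, mem_setOf_eq] at hω ⊢
          calc ε^4 ≤ |(n:ℝ)⁻¹ * W n ω|^4 := pow_le_pow_left₀ hεpos.le hω 4
            _ = ((n:ℝ)⁻¹ * W n ω)^4 := by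
              rw [← abs_pow]
              exact abs_of_nonneg (by positivity)
        have hμsub : μ (E n) ≤ μ {ω | ε^4 ≤ ((n:ℝ)⁻¹ * W n ω)^4} := measure_mono hsub
        have htr : (μ {ω | ε^4 ≤ ((n:ℝ)⁻¹ * W n ω)^4}).toReal ≤ C/ε^4 * ((n:ℝ)^2)⁻¹ := by
          have hε4 : (0:ℝ) < ε^4 := by positivity
          rw [div_mul_eq_mul_div, le_div_iff₀ hε4]
          calc (μ {ω | ε^4 ≤ ((n:ℝ)⁻¹ * W n ω)^4}).toReal * ε^4
              = ε^4 * (μ {ω | ε^4 ≤ ((n:ℝ)⁻¹ * W n ω)^4}).toReal := by ring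
            _ ≤ ∫ ω, ((n:ℝ)⁻¹ * W n ω)^4 ∂μ := hmarkov
            _ ≤ C * ((n:ℝ)^2)⁻¹ := hintval
        refine le_trans hμsub ?_
        rw [ENNReal.le_ofReal_iff_toReal_le (measure_ne_top μ _) ?_]
        · exact htr
        · positivity
    have hsum : (∑' n, μ (E n)) ≠ ⊤ := by
      have hsummable : Summable (fun n : ℕ => C/ε^4 * ((n:ℝ)^2)⁻¹) := by
        apply Summable.mul_left
        simpa only [one_div] using (summable_one_div_nat_pow (p := 2)).mpr one_lt_two
      have h1 : (∑' n, μ (E n)) ≤ ∑' n : ℕ, ENNReal.ofReal (C/ε^4 * ((n:ℝ)^2)⁻¹) :=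
        ENNReal.tsum_le_tsum hME
      have h2 : (∑' n : ℕ, ENNReal.ofReal (C/ε^4 * ((n:ℝ)^2)⁻¹))
          = ENNReal.ofReal (∑' n : ℕ, C/ε^4 * ((n:ℝ)^2)⁻¹) :=
        (ENNReal.ofReal_tsum_of_nonneg (fun n => by positivity) hsummable).symm
      rw [h2] at h1
      exact (lt_of_le_of_lt h1 ENNReal.ofReal_lt_top).ne
    filter_upwards [ae_eventually_notMem hsum] with ω hω
    filter_upwards [hω] with n hn
    simpa [hE, mem_setOf_eq, not_le] using hn
  have hae := ae_all_iff.mpr hBC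
  filter_upwards [hae] with ω hω
  have hQ : Tendsto (fun n : ℕ => (n:ℝ)⁻¹ * W n ω) atTop (nhds 0) := by
    rw [Metric.tendsto_atTop]
    intro ε hε
    obtain ⟨m, hm⟩ := exists_nat_one_div_lt hε
    obtain ⟨N, hN⟩ := (eventually_atTop).mp (hω m)
    refine ⟨N, fun n hn => ?_⟩
    rw [Real.dist_eq, sub_zero]
    exact lt_trans (hN n hn) hm
  have heq : (fun n : ℕ => (1/(n:ℝ)) * ∑ i ∈ Finset.Icc 1 n, c n i * (u i ω)^2)
      = fun n : ℕ => (n:ℝ)⁻¹ * W n ω + (1/(n:ℝ)) * ∑ i ∈ Finset.Icc 1 n, c n i := by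
    funext n
    have hsplit : W n ω = (∑ i ∈ Finset.Icc 1 n, c n i * (u i ω)^2)
        - ∑ i ∈ Finset.Icc 1 n, c n i := by
      rw [hW, ← Finset.sum_sub_distrib]
      exact Finset.sum_congr rfl fun i _ => by ring
    rw [hsplit, one_div]
    ring
  rw [heq]
  have := hQ.add hcl
  simpa using this
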